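/- Let x₁, x₂ ∈ 𝕋² with x₀ = x₂ − x₁ = (α₁, α₂) and α₁/π irrational. Let λ > 0 be an eigenvalue of the Laplacian on 𝕋² = ℝ²/2πℤ², with eigenspace E_λ = span{ e^{i⟨ξ, x⟩} : ξ ∈ ℤ², |ξ|² = λ } of dimension d = r₂(λ). Then the subspace { f ∈ E_λ : f(x₁) = f(x₂) = 0 } has dimension exactly d − 2. -/

import Mathlib

open Real Complex


noncomputable def EVD_F (ξ : ℤ × ℤ) : ℝ × ℝ → ℂ :=
  fun x => Complex.exp (Complex.I * ((ξ.1 : ℝ) * x.1 + (ξ.2 : ℝ) * x.2))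

noncomputable def EVD_chi (ξ : ℤ × ℤ) : Multiplicative (ℝ × ℝ) →* ℂ where
  toFun x := EVD_F ξ (Multiplicative.toAdd x)
  map_one' := by simp [EVD_F]
  map_mul' x y := by
    simp only [EVD_F, ← Complex.exp_add, toAdd_mul, Prod.fst_add, Prod.snd_add]
    congr 1
    push_cast
    ring

lemma EVD_exp_int_eq (a b : ℤ) (h : ∀ x : ℝ, Complex.exp (Complex.I * ((a:ℝ) * x))
    = Complex.exp (Complex.I * ((b:ℝ) * x))) : a = b := by
  by_contra hne
  have hc : ((a : ℝ) - b) ≠ 0 := by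
    simp only [sub_ne_zero]
    exact_mod_cast hne
  set t : ℝ := π / ((a:ℝ) - b) with ht
  have httt : ((a:ℝ) - b) * t = π := mul_div_cancel₀ _ hc
  have h1 := h t
  have h2 : Complex.exp (Complex.I * ((a:ℝ) * t) - Complex.I * ((b:ℝ) * t)) = 1 := by
    rw [Complex.exp_sub, h1, div_self (Complex.exp_ne_zero _)]
  have h3 : Complex.I * ((a:ℝ) * t) - Complex.I * ((b:ℝ) * t) = (π : ℂ) * Complex.I := by
    calc Complex.I * ((a:ℝ) * t) - Complex.I * ((b:ℝ) * t)
        = Complex.I * (((((a:ℝ) - b) * t : ℝ)) : ℂ) := by push_cast; ring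
      _ = (π : ℂ) * Complex.I := by rw [httt]; ring
  rw [h3, Complex.exp_pi_mul_I] at h2
  norm_num at h2

lemma EVD_F_inj : Function.Injective EVD_F := by
  intro ξ η h
  have h1 : ξ.1 = η.1 := by
    apply EVD_exp_int_eq
    intro x
    have := congrFun h (x, 0)
    simpa [EVD_F] using this
  have h2 : ξ.2 = η.2 := by
    apply EVD_exp_int_eq
    intro x
    have := congrFun h (0, x)
    simpa [EVD_F] using this
  exact Prod.ext h1 h2

lemma EVD_chi_inj : Function.Injective EVD_chi := by
  intro ξ η h
  apply EVD_F_inj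
  funext x
  have := congrArg (fun f : Multiplicative (ℝ × ℝ) →* ℂ => f (Multiplicative.ofAdd x)) h
  simpa [EVD_chi] using this

lemma EVD_F_li : LinearIndependent ℂ EVD_F :=
  (linearIndependent_monoidHom (Multiplicative (ℝ × ℝ)) ℂ).comp EVD_chi EVD_chi_inj

lemma EVD_F_ne_zero (ζ : ℤ × ℤ) (x : ℝ × ℝ) : EVD_F ζ x ≠ 0 := Complex.exp_ne_zero _

lemma EVD_exp_ne_one (α₁ : ℝ) (hirr : Irrational (α₁ / π)) (c : ℤ) (hc : c ≠ 0) :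
    Complex.exp (Complex.I * (((c:ℝ) * α₁ : ℝ) : ℂ)) ≠ 1 := by
  intro h
  rw [show (Complex.I * (((c:ℝ) * α₁ : ℝ) : ℂ) : ℂ) = (((c:ℝ) * α₁ : ℝ) : ℂ) * Complex.I by
    ring, Complex.exp_eq_one_iff] at h
  obtain ⟨n, hn⟩ := h
  have h3 : (c:ℝ) * α₁ = n * (2 * π) := by
    have := mul_right_cancel₀ Complex.I_ne_zero
      (hn.trans (by push_cast; ring : ((n : ℂ) * (2 * ↑π * Complex.I)) = (((n : ℝ) * (2*π) : ℝ) : ℂ) * Complex.I))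
    exact_mod_cast this
  have hπ : (π : ℝ) ≠ 0 := Real.pi_ne_zero
  have hcr : (c : ℝ) ≠ 0 := Int.cast_ne_zero.mpr hc
  apply Rat.not_irrational ((2 * n) / c)
  have : α₁ / π = ((2 * (n:ℚ) / c : ℚ) : ℝ) := by
    push_cast
    field_simp
    linarith [h3]
  rw [← this]
  exact hirr

lemma EVD_exp_pair_ne (α₁ : ℝ) (hirr : Irrational (α₁ / π)) (c : ℤ) (hc : c ≠ 0) (w : ℝ) :
    Complex.exp (Complex.I * (((-(c:ℝ)) * α₁ + w : ℝ) : ℂ)) ≠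
      Complex.exp (Complex.I * (((c:ℝ) * α₁ + w : ℝ) : ℂ)) := by
  intro h
  apply EVD_exp_ne_one α₁ hirr (2 * c) (by omega)
  rw [show (Complex.I * (((((2*c : ℤ):ℝ)) * α₁ : ℝ) : ℂ) : ℂ)
      = Complex.I * ((((c:ℝ)) * α₁ + w : ℝ) : ℂ) - Complex.I * (((-(c:ℝ)) * α₁ + w : ℝ) : ℂ) by
        push_cast; ring,
    Complex.exp_sub, ← h, div_self (Complex.exp_ne_zero _)]

lemma EVD_F_ratio (y z : ℝ × ℝ) (ζ : ℤ × ℤ) :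
    (EVD_F ζ y)⁻¹ * EVD_F ζ z =
      Complex.exp (Complex.I *
        (((ζ.1:ℝ) * (z.1 - y.1) + (ζ.2:ℝ) * (z.2 - y.2) : ℝ) : ℂ)) := by
  rw [EVD_F, EVD_F, ← Complex.exp_neg, ← Complex.exp_add]
  congr 1
  push_cast
  ring



/-- The Laplace eigenspace on 𝕋² with eigenvalue λ, realized as the space of
2πℤ²-periodic trigonometric polynomials spanned by e^{i⟨ξ,x⟩}, |ξ|² = λ. -/
noncomputable def laplaceEigenspace (lam : ℝ) : Submodule ℂ (ℝ × ℝ → ℂ) :=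
  Submodule.span ℂ {f | ∃ ξ : ℤ × ℤ, ((ξ.1 ^ 2 + ξ.2 ^ 2 : ℤ) : ℝ) = lam ∧
    f = fun x : ℝ × ℝ => Complex.exp (Complex.I * ((ξ.1 : ℝ) * x.1 + (ξ.2 : ℝ) * x.2))}

set_option synthInstance.maxHeartbeats 1000000 in
/-- If α₁/π is irrational, the subspace of the λ-eigenspace vanishing at the two
points x₁, x₂ (with x₂ − x₁ = (α₁, α₂)) has dimension d − 2 where d = r₂(λ). -/
theorem eigenspace_vanishing_dim (α₁ α₂ : ℝ) (x₁ x₂ : ℝ × ℝ)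
    (hdiff : x₂ - x₁ = (α₁, α₂)) (hirr : Irrational (α₁ / π))
    (lam : ℝ) (hlam : 0 < lam)
    (hex : ∃ ξ : ℤ × ℤ, ((ξ.1 ^ 2 + ξ.2 ^ 2 : ℤ) : ℝ) = lam) :
    Module.finrank ℂ
        ↥(laplaceEigenspace lam ⊓
          LinearMap.ker (LinearMap.proj (R := ℂ) (φ := fun _ : ℝ × ℝ => ℂ) x₁) ⊓
          LinearMap.ker (LinearMap.proj (R := ℂ) (φ := fun _ : ℝ × ℝ => ℂ) x₂))
      = ({ξ : ℤ × ℤ | ((ξ.1 ^ 2 + ξ.2 ^ 2 : ℤ) : ℝ) = lam}).ncard - 2 := by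
  set S : Set (ℤ × ℤ) := {ξ : ℤ × ℤ | ((ξ.1 ^ 2 + ξ.2 ^ 2 : ℤ) : ℝ) = lam} with hS
  obtain ⟨ξ₀, hξ₀⟩ := hex
  set n : ℤ := ξ₀.1 ^ 2 + ξ₀.2 ^ 2 with hn
  -- S is finite
  have hSsub : S ⊆ Set.Icc (-n, -n) (n, n) := by
    intro ξ hξ
    have h1 : ξ.1 ^ 2 + ξ.2 ^ 2 = n := by
      have : ((ξ.1 ^ 2 + ξ.2 ^ 2 : ℤ) : ℝ) = ((n : ℤ) : ℝ) := by rw [hξ, ← hξ₀]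
      exact_mod_cast this
    simp only [Set.mem_Icc, Prod.le_def]
    refine ⟨⟨?_, ?_⟩, ?_, ?_⟩ <;> nlinarith [sq_nonneg (ξ.1 - 1), sq_nonneg (ξ.1 + 1),
      sq_nonneg (ξ.2 - 1), sq_nonneg (ξ.2 + 1), sq_nonneg ξ.1, sq_nonneg ξ.2]
  have hSfin : S.Finite := (Set.finite_Icc _ _).subset hSsub
  haveI : Fintype S := hSfin.fintype
  set E := laplaceEigenspace lam with hE
  -- the eigenspace as span of the family EVD_F restricted to S
  have hspan : E = Submodule.span ℂ (Set.range (fun ξ : S => EVD_F ξ)) := by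
    rw [hE, laplaceEigenspace]
    congr 1
    ext f
    constructor
    · rintro ⟨ξ, hξ, rfl⟩
      exact ⟨⟨ξ, hξ⟩, rfl⟩
    · rintro ⟨⟨ξ, hξ⟩, rfl⟩
      exact ⟨ξ, hξ, rfl⟩
  have hli : LinearIndependent ℂ (fun ξ : S => EVD_F ξ) :=
    EVD_F_li.comp Subtype.val Subtype.val_injective
  have hfinE : Module.finrank ℂ E = Fintype.card S := by
    rw [hspan]; exact finrank_span_eq_card hli
  haveI hfd : FiniteDimensional ℂ E := by
    rw [hspan]; exact FiniteDimensional.span_of_finite ℂ (Set.finite_range _)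
  -- the evaluation map
  set ev : (ℝ × ℝ → ℂ) →ₗ[ℂ] ℂ × ℂ :=
    (LinearMap.proj (R := ℂ) (φ := fun _ : ℝ × ℝ => ℂ) x₁).prod
      (LinearMap.proj (R := ℂ) (φ := fun _ : ℝ × ℝ => ℂ) x₂) with hev
  set L : E →ₗ[ℂ] ℂ × ℂ := ev.comp E.subtype with hL
  -- membership of exponentials
  have EVD_Fmem_local : ∀ ζ : ℤ × ℤ, ((ζ.1 ^ 2 + ζ.2 ^ 2 : ℤ) : ℝ) = lam → EVD_F ζ ∈ E :=
    fun ζ h => Submodule.subset_span ⟨ζ, h, rfl⟩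
  -- find ξ ∈ S with nonzero first coordinate
  obtain ⟨a, b, hab, ha⟩ : ∃ a b : ℤ, (((a ^ 2 + b ^ 2 : ℤ) : ℝ) = lam) ∧ a ≠ 0 := by
    by_cases h0 : ξ₀.1 ≠ 0
    · exact ⟨ξ₀.1, ξ₀.2, hξ₀, h0⟩
    · push_neg at h0
      refine ⟨ξ₀.2, ξ₀.1, by rw [← hξ₀, hn]; push_cast; ring, ?_⟩
      intro hb0
      have : lam = 0 := by rw [← hξ₀, hn, h0, hb0]; norm_num
      exact absurd this.symm (ne_of_lt hlam)
  have hab' : ((((-a) : ℤ) ^ 2 + b ^ 2 : ℤ) : ℝ) = lam := by rw [← hab]; push_cast; ring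
  have hα1 : x₂.1 - x₁.1 = α₁ := by rw [← Prod.fst_sub, hdiff]
  have hα2 : x₂.2 - x₁.2 = α₂ := by rw [← Prod.snd_sub, hdiff]
  -- the two special functions
  set g : ℝ × ℝ → ℂ := (EVD_F (-a, b) x₁)⁻¹ • EVD_F (-a, b) - (EVD_F (a, b) x₁)⁻¹ • EVD_F (a, b) with hg
  set h : ℝ × ℝ → ℂ := (EVD_F (-a, b) x₂)⁻¹ • EVD_F (-a, b) - (EVD_F (a, b) x₂)⁻¹ • EVD_F (a, b) with hh
  have hgE : g ∈ E := sub_mem (Submodule.smul_mem _ _ (EVD_Fmem_local _ hab'))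
    (Submodule.smul_mem _ _ (EVD_Fmem_local _ hab))
  have hhE : h ∈ E := sub_mem (Submodule.smul_mem _ _ (EVD_Fmem_local _ hab'))
    (Submodule.smul_mem _ _ (EVD_Fmem_local _ hab))
  have hg1 : g x₁ = 0 := by
    simp only [hg, Pi.sub_apply, Pi.smul_apply, smul_eq_mul]
    rw [inv_mul_cancel₀ (EVD_F_ne_zero _ _), inv_mul_cancel₀ (EVD_F_ne_zero _ _), sub_self]
  have hh2 : h x₂ = 0 := by
    simp only [hh, Pi.sub_apply, Pi.smul_apply, smul_eq_mul]
    rw [inv_mul_cancel₀ (EVD_F_ne_zero _ _), inv_mul_cancel₀ (EVD_F_ne_zero _ _), sub_self]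
  have hg2 : g x₂ ≠ 0 := by
    simp only [hg, Pi.sub_apply, Pi.smul_apply, smul_eq_mul, sub_ne_zero]
    rw [EVD_F_ratio, EVD_F_ratio, hα1, hα2]
    rw [show ((((-a, b).1 : ℤ):ℝ) * α₁ + (((-a, b).2 : ℤ):ℝ) * α₂ : ℝ)
        = (-(a:ℝ)) * α₁ + (b:ℝ) * α₂ by push_cast; ring,
      show ((((a, b).1 : ℤ):ℝ) * α₁ + (((a, b).2 : ℤ):ℝ) * α₂ : ℝ)
        = ((a:ℝ)) * α₁ + (b:ℝ) * α₂ by push_cast; ring]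
    exact EVD_exp_pair_ne α₁ hirr a ha _
  have hh1 : h x₁ ≠ 0 := by
    simp only [hh, Pi.sub_apply, Pi.smul_apply, smul_eq_mul, sub_ne_zero]
    rw [EVD_F_ratio, EVD_F_ratio]
    have e1 : x₁.1 - x₂.1 = -α₁ := by rw [← hα1]; ring
    have e2 : x₁.2 - x₂.2 = -α₂ := by rw [← hα2]; ring
    rw [e1, e2]
    rw [show ((((-a, b).1 : ℤ):ℝ) * (-α₁) + (((-a, b).2 : ℤ):ℝ) * (-α₂) : ℝ)
        = (-((-a : ℤ):ℝ)) * α₁ + ((b:ℝ) * (-α₂)) by push_cast; ring,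
      show ((((a, b).1 : ℤ):ℝ) * (-α₁) + (((a, b).2 : ℤ):ℝ) * (-α₂) : ℝ)
        = (((-a : ℤ):ℝ)) * α₁ + ((b:ℝ) * (-α₂)) by push_cast; ring]
    exact EVD_exp_pair_ne α₁ hirr (-a) (by omega) _
  -- L is surjective
  have hLg : L ⟨g, hgE⟩ = (0, g x₂) := by
    simp only [hL, hev, LinearMap.comp_apply, Submodule.subtype_apply, LinearMap.prod_apply,
      Function.prod, LinearMap.proj_apply, hg1]
  have hLh : L ⟨h, hhE⟩ = (h x₁, 0) := by
    simp only [hL, hev, LinearMap.comp_apply, Submodule.subtype_apply, LinearMap.prod_apply,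
      Function.prod, LinearMap.proj_apply, hh2]
  have hsurj : Function.Surjective L := by
    intro v
    refine ⟨(v.1 / h x₁) • ⟨h, hhE⟩ + (v.2 / g x₂) • ⟨g, hgE⟩, ?_⟩
    rw [map_add, map_smul, map_smul, hLg, hLh]
    ext
    · simp only [Prod.fst_add, Prod.smul_fst, smul_eq_mul]
      field_simp
      ring
    · simp only [Prod.snd_add, Prod.smul_snd, smul_eq_mul]
      field_simp
      ring
  -- identify the submodule with ker L
  have hle : E ⊓ LinearMap.ker (LinearMap.proj (R := ℂ) (φ := fun _ : ℝ × ℝ => ℂ) x₁) ⊓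
      LinearMap.ker (LinearMap.proj (R := ℂ) (φ := fun _ : ℝ × ℝ => ℂ) x₂) ≤ E :=
    le_trans inf_le_left inf_le_left
  have hcomap : Submodule.comap E.subtype
      (E ⊓ LinearMap.ker (LinearMap.proj (R := ℂ) (φ := fun _ : ℝ × ℝ => ℂ) x₁) ⊓
        LinearMap.ker (LinearMap.proj (R := ℂ) (φ := fun _ : ℝ × ℝ => ℂ) x₂))
      = LinearMap.ker L := by
    rw [hL, LinearMap.ker_comp, hev, LinearMap.ker_prod, Submodule.comap_inf,
      Submodule.comap_inf, Submodule.comap_inf, Submodule.comap_subtype_self, top_inf_eq]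
  have heq : Module.finrank ℂ
      ↥(E ⊓ LinearMap.ker (LinearMap.proj (R := ℂ) (φ := fun _ : ℝ × ℝ => ℂ) x₁) ⊓
        LinearMap.ker (LinearMap.proj (R := ℂ) (φ := fun _ : ℝ × ℝ => ℂ) x₂))
      = Module.finrank ℂ (LinearMap.ker L) := by
    rw [← hcomap]
    exact (Submodule.comapSubtypeEquivOfLe hle).finrank_eq.symm
  -- rank-nullity
  have hrn := LinearMap.finrank_range_add_finrank_ker L
  rw [LinearMap.range_eq_top.mpr hsurj, hfinE] at hrn
  have htop : Module.finrank ℂ (⊤ : Submodule ℂ (ℂ × ℂ)) = 2 := by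
    simp [finrank_top]
  rw [htop] at hrn
  have hncard : S.ncard = Fintype.card S := by
    rw [Set.ncard_eq_toFinset_card', Set.toFinset_card]
  rw [heq, hncard]
  omega
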